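/- Let G be a graph on n vertices with e edges, and let H be a doubly transitive permutation group on the vertex set of G. If the index of H ∩ Aut(G) in H is r, then the r images of G under H cover each pair of vertices exactly 2re/(n(n−1)) times. -/

import Mathlib

open MulAction Finset

section Aux

variable {V : Type*}

instance : SMul (Equiv.Perm V) (SimpleGraph V) :=
  ⟨fun σ K => K.map σ.toEmbedding⟩

lemma perm_smul_def (σ : Equiv.Perm V) (K : SimpleGraph V) :
    σ • K = K.map σ.toEmbedding := rfl

lemma perm_smul_adj (σ : Equiv.Perm V) (K : SimpleGraph V) (a b : V) :
    (σ • K).Adj a b ↔ K.Adj (σ⁻¹ a) (σ⁻¹ b) := by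
  simp only [perm_smul_def, SimpleGraph.map_adj]
  constructor
  · rintro ⟨u, v, h, rfl, rfl⟩
    simpa using h
  · intro h
    exact ⟨σ⁻¹ a, σ⁻¹ b, h, by simp, by simp⟩

instance : MulAction (Equiv.Perm V) (SimpleGraph V) where
  one_smul K := by ext a b; rw [perm_smul_adj]; simp
  mul_smul σ τ K := by ext a b; simp [perm_smul_adj, Equiv.Perm.mul_apply]

end Aux

/-- The automorphism group of a graph `G`, as a subgroup of the symmetric
group on its vertices. -/
def autSubgroup {V : Type*} (G : SimpleGraph V) : Subgroup (Equiv.Perm V) where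
  carrier := {σ | ∀ u v, G.Adj (σ u) (σ v) ↔ G.Adj u v}
  one_mem' := by intro u v; rfl
  mul_mem' := by
    intro a b ha hb u v
    simpa [Equiv.Perm.mul_apply] using (ha (b u) (b v)).trans (hb u v)
  inv_mem' := by
    intro a ha u v
    simpa using (ha (a⁻¹ u) (a⁻¹ v)).symm

section Aux2

variable {V : Type*}

lemma stabilizer_eq_aut (G : SimpleGraph V) :
    stabilizer (Equiv.Perm V) G = autSubgroup G := by
  ext σ
  constructor
  · intro h u v
    have h' : σ • G = G := h
    have := perm_smul_adj σ G (σ u) (σ v)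
    rw [h'] at this
    simpa using this
  · intro h
    show σ • G = G
    ext a b
    rw [perm_smul_adj]
    have := h (σ⁻¹ a) (σ⁻¹ b)
    simpa using this.symm

lemma stabilizer_subgroupOf (G : SimpleGraph V) (H : Subgroup (Equiv.Perm V)) :
    stabilizer H G = (autSubgroup G).subgroupOf H := by
  ext ⟨σ, hσ⟩
  have hrw : (⟨σ, hσ⟩ : H) • G = σ • G := rfl
  constructor
  · intro h
    have h2 : σ ∈ stabilizer (Equiv.Perm V) G := by
      show σ • G = G; rw [← hrw]; exact h
    rw [stabilizer_eq_aut] at h2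
    exact h2
  · intro h
    show (⟨σ, hσ⟩ : H) • G = G
    rw [hrw]
    have : σ ∈ stabilizer (Equiv.Perm V) G := by rw [stabilizer_eq_aut]; exact h
    exact this

end Aux2

theorem two_transitive_images_cover {V : Type*} [Fintype V] [DecidableEq V]
    (G : SimpleGraph V) [DecidableRel G.Adj] (n e : ℕ)
    (hn : Fintype.card V = n) (he : G.edgeFinset.card = e)
    (H : Subgroup (Equiv.Perm V))
    (h2 : ∀ a b c d : V, a ≠ b → c ≠ d → ∃ σ ∈ H, σ a = c ∧ σ b = d)
    (r : ℕ) (hr : (autSubgroup G).relIndex H = r) :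
    ∀ u v : V, u ≠ v →
      Nat.card {K : SimpleGraph V //
          (∃ σ ∈ H, G.map (Equiv.toEmbedding σ) = K) ∧ K.Adj u v} =
        2 * r * e / (n * (n - 1)) := by
  classical
  intro u v huv
  set Ω : Finset (SimpleGraph V) := (orbit H G).toFinset with hΩ
  -- membership in Ω
  have hmem : ∀ K : SimpleGraph V, K ∈ Ω ↔ ∃ σ ∈ H, G.map σ.toEmbedding = K := by
    intro K
    rw [hΩ, Set.mem_toFinset, mem_orbit_iff]
    constructor
    · rintro ⟨⟨σ, hσ⟩, rfl⟩
      exact ⟨σ, hσ, rfl⟩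
    · rintro ⟨σ, hσ, rfl⟩
      exact ⟨⟨σ, hσ⟩, rfl⟩
  -- closure of Ω under the action of elements of H
  have hsmul : ∀ σ ∈ H, ∀ K ∈ Ω, σ • K ∈ Ω := by
    intro σ hσ K hK
    rw [hmem] at hK ⊢
    obtain ⟨τ, hτ, rfl⟩ := hK
    refine ⟨σ * τ, H.mul_mem hσ hτ, ?_⟩
    rw [← perm_smul_def, ← perm_smul_def]
    exact mul_smul σ τ G
  -- cardinality of Ω is r
  have hΩcard : Ω.card = r := by
    have h1 : Ω.card = (orbit H G).ncard := (Set.ncard_eq_toFinset_card' _).symm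
    rw [h1, ← index_stabilizer, stabilizer_subgroupOf]
    exact hr
  -- each member of Ω has e edges
  have hedges : ∀ K ∈ Ω, K.edgeFinset.card = e := by
    intro K hK
    obtain ⟨σ, hσ, hKeq⟩ := (hmem K).1 hK
    have hiso : G ≃g K := hKeq ▸ SimpleGraph.Iso.map σ G
    rw [← he]
    exact hiso.card_edgeFinset_eq.symm
  -- the counting function
  set f : V → V → ℕ := fun a b => (Ω.filter fun K => K.Adj a b).card with hf
  -- f is constant on distinct pairs
  have hconst : ∀ a b : V, a ≠ b → f a b = f u v := by
    intro a b hab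
    obtain ⟨σ, hσH, hσa, hσb⟩ := h2 a b u v hab huv
    refine Finset.card_bij (fun K _ => σ • K) ?_ ?_ ?_
    · intro K hK
      rw [mem_filter] at hK ⊢
      refine ⟨hsmul σ hσH K hK.1, ?_⟩
      rw [perm_smul_adj]
      have ha : σ⁻¹ u = a := by rw [← hσa]; simp
      have hb : σ⁻¹ v = b := by rw [← hσb]; simp
      rw [ha, hb]; exact hK.2
    · intro K₁ _ K₂ _ hEq
      exact smul_left_cancel σ hEq
    · intro L hL
      rw [mem_filter] at hL
      refine ⟨σ⁻¹ • L, ?_, ?_⟩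
      · rw [mem_filter]
        refine ⟨hsmul σ⁻¹ (H.inv_mem hσH) L hL.1, ?_⟩
        rw [perm_smul_adj]
        simp only [inv_inv]
        rw [hσa, hσb]; exact hL.2
      · exact smul_inv_smul σ L
  -- double counting
  have hsum1 : ∑ p ∈ (univ : Finset V).offDiag, f p.1 p.2 =
      (univ : Finset V).offDiag.card * f u v := by
    rw [Finset.sum_congr rfl fun p hp => hconst p.1 p.2 (Finset.mem_offDiag.1 hp).2.2]
    rw [Finset.sum_const, smul_eq_mul]
  have hsum2 : ∑ p ∈ (univ : Finset V).offDiag, f p.1 p.2 = r * (2 * e) := by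
    have step1 : ∀ p : V × V, f p.1 p.2 = ∑ K ∈ Ω, if K.Adj p.1 p.2 then 1 else 0 := by
      intro p; rw [hf]; exact Finset.card_filter _ _
    calc ∑ p ∈ (univ : Finset V).offDiag, f p.1 p.2
        = ∑ p ∈ (univ : Finset V).offDiag, ∑ K ∈ Ω, if K.Adj p.1 p.2 then 1 else 0 := by
          exact Finset.sum_congr rfl fun p _ => step1 p
      _ = ∑ K ∈ Ω, ∑ p ∈ (univ : Finset V).offDiag, if K.Adj p.1 p.2 then 1 else 0 :=
          Finset.sum_comm
      _ = ∑ K ∈ Ω, (2 * e) := by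
          refine Finset.sum_congr rfl fun K hK => ?_
          rw [← Finset.card_filter]
          have hfilter : (univ : Finset V).offDiag.filter (fun p => K.Adj p.1 p.2) =
              ((univ : Finset V) ×ˢ (univ : Finset V)).filter (fun p => K.Adj p.1 p.2) := by
            ext p
            simp only [mem_filter, Finset.mem_offDiag, Finset.mem_product, mem_univ,
              true_and, and_true]
            constructor
            · rintro ⟨h1, h3⟩; exact h3
            · intro h3; exact ⟨h3.ne, h3⟩
          rw [hfilter, Finset.card_filter, Finset.sum_product]
          have hdeg : ∀ x : V, (∑ y : V, if K.Adj x y then 1 else 0) = K.degree x := by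
            intro x
            rw [← Finset.card_filter, SimpleGraph.degree, SimpleGraph.neighborFinset_eq_filter]
          rw [Finset.sum_congr rfl fun x _ => hdeg x,
            SimpleGraph.sum_degrees_eq_twice_card_edges, hedges K hK]
      _ = r * (2 * e) := by rw [Finset.sum_const, smul_eq_mul, hΩcard]
  -- relate Nat.card of the subtype to f u v
  have hkey : Nat.card {K : SimpleGraph V //
      (∃ σ ∈ H, G.map (Equiv.toEmbedding σ) = K) ∧ K.Adj u v} = f u v := by
    rw [Nat.card_eq_fintype_card, Fintype.card_subtype, hf]
    congr 1
    ext K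
    simp only [mem_filter, mem_univ, true_and, hmem K]
  -- cardinality of offDiag
  have hoff : (univ : Finset V).offDiag.card = n * (n - 1) := by
    rw [Finset.offDiag_card, card_univ, hn]
    cases n with
    | zero => simp
    | succ m => simp [Nat.mul_succ, Nat.succ_mul]
  -- n ≥ 2
  have hn2 : 2 ≤ n := by
    rw [← hn]
    haveI : Nontrivial V := ⟨⟨u, v, huv⟩⟩
    exact Fintype.one_lt_card
  have hpos : 0 < n * (n - 1) := by
    have : 1 ≤ n - 1 := by omega
    exact Nat.mul_pos (by omega) this
  rw [hkey]
  rw [hsum1] at hsum2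
  have hmain : 2 * r * e = f u v * (n * (n - 1)) := by
    calc 2 * r * e = r * (2 * e) := by ring
      _ = (univ : Finset V).offDiag.card * f u v := hsum2.symm
      _ = f u v * (n * (n - 1)) := by rw [hoff, Nat.mul_comm]
  exact (Nat.div_eq_of_eq_mul_left hpos hmain).symm
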